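/- Let g be a restricted Lie algebra over a field of characteristic p > 0 and let b be a solvable Lie subalgebra of g. Then the restricted subalgebra of g generated by b (the smallest Lie subalgebra containing b and closed under the p-operation) is solvable. -/

import Mathlib

attribute [local instance 100] LieRing.ofAssociativeRing

open LieAlgebra

section BracketSpan

variable {k : Type*} [Field k] {L : Type*} [LieRing L] [LieAlgebra k L]

/-- The span of all brackets of elements of a submodule. -/
noncomputable def brkt (N : Submodule k L) : Submodule k L :=
  Submodule.span k {z | ∃ x ∈ N, ∃ y ∈ N, ⁅x, y⁆ = z}

lemma lie_mem_brkt {N : Submodule k L} {x y : L} (hx : x ∈ N) (hy : y ∈ N) :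
    ⁅x, y⁆ ∈ brkt N := Submodule.subset_span ⟨x, hx, y, hy, rfl⟩

lemma brkt_mono : Monotone (brkt (k := k) (L := L)) := by
  intro M N h
  apply Submodule.span_mono
  rintro z ⟨x, hx, y, hy, rfl⟩
  exact ⟨x, h hx, y, h hy, rfl⟩

lemma brkt_bot : brkt (⊥ : Submodule k L) = ⊥ := by
  rw [eq_bot_iff, brkt, Submodule.span_le]
  rintro z ⟨x, hx, y, hy, rfl⟩
  rw [Submodule.mem_bot] at hx
  simp [hx]

lemma brkt_iterate_le_map (S : LieSubalgebra k L) (n : ℕ) :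
    brkt^[n] S.toSubmodule ≤
      (LieAlgebra.derivedSeries k S n).toSubmodule.map S.toSubmodule.subtype := by
  induction n with
  | zero =>
      intro x hx
      exact ⟨⟨x, hx⟩, trivial, rfl⟩
  | succ n ih =>
      rw [Function.iterate_succ_apply']
      refine le_trans (brkt_mono ih) ?_
      rw [brkt, Submodule.span_le]
      rintro z ⟨x, hx, y, hy, rfl⟩
      obtain ⟨x', hx', rfl⟩ := hx
      obtain ⟨y', hy', rfl⟩ := hy
      refine ⟨⁅(show S from x'), (show S from y')⁆, ?_, rfl⟩
      rw [derivedSeries_def, derivedSeriesOfIdeal_succ]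
      exact LieSubmodule.lie_mem_lie hx' hy'

lemma map_derivedSeries_le_brkt_iterate (S : LieSubalgebra k L) (n : ℕ) :
    (LieAlgebra.derivedSeries k S n).toSubmodule.map S.toSubmodule.subtype ≤
      brkt^[n] S.toSubmodule := by
  induction n with
  | zero =>
      rintro x ⟨⟨x', hx'⟩, -, rfl⟩
      exact hx'
  | succ n ih =>
      rw [Function.iterate_succ_apply']
      have hds : LieAlgebra.derivedSeries k S (n + 1) =
          ⁅LieAlgebra.derivedSeries k S n, LieAlgebra.derivedSeries k S n⁆ :=
        LieAlgebra.derivedSeriesOfIdeal_succ k (↥S) ⊤ n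
      rw [hds, LieSubmodule.lieIdeal_oper_eq_linear_span', Submodule.map_span,
        Submodule.span_le]
      rintro z ⟨w, ⟨x, hx, y, hy, rfl⟩, rfl⟩
      have hx2 : (x : L) ∈ brkt^[n] S.toSubmodule := ih ⟨x, hx, rfl⟩
      have hy2 : (y : L) ∈ brkt^[n] S.toSubmodule := ih ⟨y, hy, rfl⟩
      exact lie_mem_brkt hx2 hy2

lemma isSolvable_of_brkt_le (P b : LieSubalgebra k L) (hb : LieAlgebra.IsSolvable b)
    (h : brkt P.toSubmodule ≤ brkt b.toSubmodule) : LieAlgebra.IsSolvable P := by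
  obtain ⟨n, hn⟩ := (LieAlgebra.isSolvable_iff k b).mp hb
  have h1 : brkt^[n] b.toSubmodule = ⊥ := by
    refine le_bot_iff.mp (le_trans (brkt_iterate_le_map b n) ?_)
    rw [hn]
    simp
  have h2 : brkt^[n + 1] P.toSubmodule ≤ ⊥ := by
    rw [Function.iterate_succ_apply]
    calc brkt^[n] (brkt P.toSubmodule) ≤ brkt^[n] (brkt b.toSubmodule) :=
          brkt_mono.iterate n h
    _ = brkt^[n + 1] b.toSubmodule := (Function.iterate_succ_apply _ _ _).symm
    _ = brkt (brkt^[n] b.toSubmodule) := Function.iterate_succ_apply' _ _ _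
    _ = ⊥ := by rw [h1, brkt_bot]
  refine (LieAlgebra.isSolvable_iff k P).mpr ⟨n + 1, ?_⟩
  rw [LieSubmodule.eq_bot_iff]
  intro m hm
  have : (m : L) ∈ brkt^[n + 1] P.toSubmodule :=
    map_derivedSeries_le_brkt_iterate P (n + 1) ⟨m, hm, rfl⟩
  have h3 := h2 this
  rw [Submodule.mem_bot] at h3
  exact Subtype.ext h3

end BracketSpan


section Closure

variable {k : Type*} [Field k] {L : Type*} [LieRing L] [LieAlgebra k L]

/-- One step of the `p`-closure: add all `p`-th powers. -/
noncomputable def pstep (pOp : L → L) (S : Submodule k L) : Submodule k L :=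
  Submodule.span k ((S : Set L) ∪ pOp '' (S : Set L))

lemma le_pstep (pOp : L → L) (S : Submodule k L) : S ≤ pstep pOp S :=
  fun _ hx => Submodule.subset_span (Or.inl hx)

lemma pOp_mem_pstep (pOp : L → L) (S : Submodule k L) {x : L} (hx : x ∈ S) :
    pOp x ∈ pstep pOp S :=
  Submodule.subset_span (Or.inr ⟨x, hx, rfl⟩)

lemma ad_pow_mem {C : Submodule k L} {u : L} (hu : ∀ c ∈ C, ⁅u, c⁆ ∈ C) (m : ℕ) :
    ∀ c ∈ C, ((LieAlgebra.ad k L u) ^ m) c ∈ C := by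
  induction m with
  | zero => intro c hc; simpa using hc
  | succ m ih =>
      intro c hc
      rw [pow_succ', Module.End.mul_apply, LieAlgebra.ad_apply]
      exact hu _ (ih c hc)

lemma pstep_invariant {p : ℕ} (hppos : 0 < p) (pOp : L → L)
    (hkey : ∀ x z : L, ⁅pOp x, z⁆ = ((LieAlgebra.ad k L x) ^ p) z)
    {C S : Submodule k L}
    (hCC : ∀ u ∈ S, ∀ c ∈ C, ⁅u, c⁆ ∈ C)
    (hSS : ∀ x ∈ S, ∀ y ∈ S, ⁅x, y⁆ ∈ C) :
    (∀ u ∈ pstep pOp S, ∀ c ∈ C, ⁅u, c⁆ ∈ C) ∧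
      (∀ x ∈ pstep pOp S, ∀ y ∈ pstep pOp S, ⁅x, y⁆ ∈ C) := by
  have hppow : ∀ u z : L, ⁅pOp u, z⁆ = ((LieAlgebra.ad k L u) ^ (p - 1)) ⁅u, z⁆ := by
    intro u z
    rw [hkey u z]
    conv_lhs => rw [show p = (p - 1) + 1 from (Nat.succ_pred_eq_of_pos hppos).symm]
    rw [pow_succ, Module.End.mul_apply, LieAlgebra.ad_apply]
  have hkey2 : ∀ u ∈ S, ∀ z : L, ⁅u, z⁆ ∈ C → ⁅pOp u, z⁆ ∈ C := by
    intro u hu z hz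
    rw [hppow u z]
    exact ad_pow_mem (hCC u hu) (p - 1) _ hz
  have hmix : ∀ u ∈ S, ∀ v ∈ S, ⁅u, pOp v⁆ ∈ C := by
    intro u hu v hv
    have h5 : ⁅pOp v, u⁆ ∈ C := hkey2 v hv u (hSS v hv u hu)
    rw [← lie_skew]
    exact Submodule.neg_mem _ h5
  have h1' : ∀ u ∈ pstep pOp S, ∀ c ∈ C, ⁅u, c⁆ ∈ C := by
    intro u hu
    induction hu using Submodule.span_induction with
    | mem z hz =>
        rcases hz with hz | ⟨w, hw, rfl⟩
        · exact hCC z hz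
        · intro c hc; exact hkey2 w hw c (hCC w hw c hc)
    | zero => intro c hc; simp
    | add y z hy hz ihy ihz =>
        intro c hc
        rw [add_lie]
        exact Submodule.add_mem _ (ihy c hc) (ihz c hc)
    | smul t y hy ihy =>
        intro c hc
        rw [smul_lie]
        exact Submodule.smul_mem _ t (ihy c hc)
  refine ⟨h1', ?_⟩
  have hgen : ∀ x ∈ ((S : Set L) ∪ pOp '' (S : Set L)), ∀ y ∈ pstep pOp S, ⁅x, y⁆ ∈ C := by
    intro x hx y hy
    induction hy using Submodule.span_induction with
    | mem z hz =>
        rcases hx with hx | ⟨u, hu, rfl⟩ <;> rcases hz with hz | ⟨v, hv, rfl⟩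
        · exact hSS x hx z hz
        · exact hmix x hx v hv
        · exact hkey2 u hu z (hSS u hu z hz)
        · exact hkey2 u hu (pOp v) (hmix u hu v hv)
    | zero => simp
    | add y z hy hz ihy ihz =>
        rw [lie_add]
        exact Submodule.add_mem _ ihy ihz
    | smul t y hy ihy =>
        rw [lie_smul]
        exact Submodule.smul_mem _ t ihy
  intro x hx y hy
  induction hx using Submodule.span_induction with
  | mem z hz => exact hgen z hz y hy
  | zero => simp
  | add w z hw hz ihw ihz =>
      rw [add_lie]
      exact Submodule.add_mem _ ihw ihz
  | smul t w hw ihw =>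
      rw [smul_lie]
      exact Submodule.smul_mem _ t ihw

end Closure

section PowLemma

variable {p : ℕ} [Fact p.Prime] {k : Type*} [Field k] [CharP k p]
  {L : Type*} [LieRing L] [LieAlgebra k L]
  {A : Type*} [Ring A] [Algebra k A] [Nontrivial A]

lemma pOp_bracket_eq (pOp : L → L) (ι : L →ₗ⁅k⁆ A) (hι : Function.Injective ι)
    (hp : ∀ x : L, ι (pOp x) = ι x ^ p) (x z : L) :
    ⁅pOp x, z⁆ = ((LieAlgebra.ad k L x) ^ p) z := by
  haveI : CharP (Module.End k A) p := charP_of_injective_ringHom (algebraMap k (Module.End k A)).injective p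
  apply hι
  set e : Module.End k A := LinearMap.mulLeft k (ι x) - LinearMap.mulRight k (ι x) with he
  have e_apply : ∀ a : A, e a = ⁅ι x, a⁆ := by
    intro a
    simp [he, Ring.lie_def]
  have e1 : ∀ (n : ℕ) (z : L), ι (((LieAlgebra.ad k L x) ^ n) z) = (e ^ n) (ι z) := by
    intro n
    induction n with
    | zero => intro z; simp
    | succ n ih =>
        intro z
        simp only [pow_succ', Module.End.mul_apply, LieAlgebra.ad_apply,
          LieHom.map_lie, ih z]
        exact (e_apply _).symm
  have e2 : e ^ p = LinearMap.mulLeft k (ι x ^ p) - LinearMap.mulRight k (ι x ^ p) := by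
    rw [he, sub_pow_char_of_commute _
        (LinearMap.commute_mulLeft_right (R := k) (ι x) (ι x)),
      LinearMap.pow_mulLeft, LinearMap.pow_mulRight]
  calc ι ⁅pOp x, z⁆ = ⁅ι (pOp x), ι z⁆ := by rw [LieHom.map_lie]
  _ = ι x ^ p * ι z - ι z * ι x ^ p := by rw [hp, Ring.lie_def]
  _ = (e ^ p) (ι z) := by rw [e2]; simp
  _ = ι (((LieAlgebra.ad k L x) ^ p) z) := (e1 p z).symm

end PowLemma

/-- in a restricted Lie algebra `(g, [p])` over a field of
characteristic `p > 0`, the restricted subalgebra generated by a solvable Lie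
subalgebra `b` (the smallest Lie subalgebra containing `b` and closed under
the `p`-operation, here realized as the infimum of all such subalgebras) is
solvable.  The restricted structure is encoded via Jacobson's
characterization: the `p`-operation `pOp` is realized as the associative
`p`-th power under a faithful embedding `ι` into an associative algebra. -/
theorem pClosure_of_solvable_isSolvable
    {p : ℕ} [Fact p.Prime] {k : Type*} [Field k] [CharP k p]
    {L : Type*} [LieRing L] [LieAlgebra k L]
    (pOp : L → L)
    (A : Type*) [Ring A] [Algebra k A]
    (ι : L →ₗ⁅k⁆ A) (hι : Function.Injective ι)
    (hp : ∀ x : L, ι (pOp x) = ι x ^ p)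
    (b : LieSubalgebra k L) (hb : LieAlgebra.IsSolvable b) :
    LieAlgebra.IsSolvable
      ↥(sInf {S : LieSubalgebra k L | b ≤ S ∧ ∀ x ∈ S, pOp x ∈ S}) := by
  rcases subsingleton_or_nontrivial A with hA | hA
  · haveI : Subsingleton L := hι.subsingleton
    haveI : IsLieAbelian ↥(sInf {S : LieSubalgebra k L | b ≤ S ∧ ∀ x ∈ S, pOp x ∈ S}) :=
      ⟨fun a b' => Subtype.ext (Subsingleton.elim _ _)⟩
    infer_instance
  · have hppos : 0 < p := (Fact.out : p.Prime).pos
    have key : ∀ x z : L, ⁅pOp x, z⁆ = ((LieAlgebra.ad k L x) ^ p) z :=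
      pOp_bracket_eq pOp ι hι hp
    have hCb : brkt b.toSubmodule ≤ b.toSubmodule := by
      rw [brkt, Submodule.span_le]
      rintro z ⟨x, hx, y, hy, rfl⟩
      exact b.lie_mem hx hy
    have hC0 : ∀ x ∈ b.toSubmodule, ∀ c ∈ brkt b.toSubmodule, ⁅x, c⁆ ∈ brkt b.toSubmodule := by
      intro x hx c hc
      rw [brkt] at hc
      induction hc using Submodule.span_induction with
      | mem z hz =>
          obtain ⟨u, hu, v, hv, rfl⟩ := hz
          rw [leibniz_lie]
          exact Submodule.add_mem _ (lie_mem_brkt (b.lie_mem hx hu) hv)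
            (lie_mem_brkt hu (b.lie_mem hx hv))
      | zero => simp
      | add y z hy hz ihy ihz =>
          rw [lie_add]
          exact Submodule.add_mem _ ihy ihz
      | smul t y hy ihy =>
          rw [lie_smul]
          exact Submodule.smul_mem _ t ihy
    -- the chain of submodules
    set B : ℕ → Submodule k L := fun n => (pstep pOp)^[n] b.toSubmodule with hB
    have hB0 : B 0 = b.toSubmodule := rfl
    have hBsucc : ∀ n, B (n + 1) = pstep pOp (B n) := fun n =>
      Function.iterate_succ_apply' _ _ _
    have hInv : ∀ n, (∀ u ∈ B n, ∀ c ∈ brkt b.toSubmodule, ⁅u, c⁆ ∈ brkt b.toSubmodule) ∧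
        (∀ x ∈ B n, ∀ y ∈ B n, ⁅x, y⁆ ∈ brkt b.toSubmodule) := by
      intro n
      induction n with
      | zero => exact ⟨hC0, fun x hx y hy => lie_mem_brkt hx hy⟩
      | succ n ih =>
          rw [hBsucc n]
          exact pstep_invariant hppos pOp key ih.1 ih.2
    have hBmono : Monotone B := by
      apply monotone_nat_of_le_succ
      intro n
      rw [hBsucc n]
      exact le_pstep pOp (B n)
    have hmem : ∀ x : L, (x ∈ ⨆ n, B n) ↔ ∃ n, x ∈ B n := fun x =>
      Submodule.mem_iSup_of_chain ⟨B, hBmono⟩ x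
    -- assemble the Lie subalgebra
    have hlie : ∀ {x y : L}, x ∈ (⨆ n, B n) → y ∈ (⨆ n, B n) → ⁅x, y⁆ ∈ (⨆ n, B n) := by
      intro x y hx hy
      obtain ⟨m, hm⟩ := (hmem x).mp hx
      obtain ⟨n, hn⟩ := (hmem y).mp hy
      have hx' : x ∈ B (max m n) := hBmono (le_max_left m n) hm
      have hy' : y ∈ B (max m n) := hBmono (le_max_right m n) hn
      have : ⁅x, y⁆ ∈ brkt b.toSubmodule := (hInv (max m n)).2 x hx' y hy'
      exact (hmem _).mpr ⟨0, hCb this⟩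
    let Bsub : LieSubalgebra k L :=
      { toSubmodule := ⨆ n, B n
        lie_mem' := fun hx hy => hlie hx hy }
    have hBsubmem : Bsub ∈ {S : LieSubalgebra k L | b ≤ S ∧ ∀ x ∈ S, pOp x ∈ S} := by
      constructor
      · intro x hx
        exact (hmem x).mpr ⟨0, hx⟩
      · intro x hx
        obtain ⟨n, hn⟩ := (hmem x).mp hx
        refine (hmem (pOp x)).mpr ⟨n + 1, ?_⟩
        rw [hBsucc n]
        exact pOp_mem_pstep pOp (B n) hn
    have hPB : sInf {S : LieSubalgebra k L | b ≤ S ∧ ∀ x ∈ S, pOp x ∈ S} ≤ Bsub :=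
      sInf_le hBsubmem
    apply isSolvable_of_brkt_le _ b hb
    rw [brkt, Submodule.span_le]
    rintro z ⟨x, hx, y, hy, rfl⟩
    have hx' : x ∈ Bsub := hPB hx
    have hy' : y ∈ Bsub := hPB hy
    obtain ⟨m, hm⟩ := (hmem x).mp hx'
    obtain ⟨n, hn⟩ := (hmem y).mp hy'
    exact (hInv (max m n)).2 x (hBmono (le_max_left m n) hm) y (hBmono (le_max_right m n) hn)
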